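/- Let ℓ: ℝ → ℝ be a strictly convex differentiable gradient-symmetric function with constant c, satisfying inf ℓ = 0 and lim_{v→∞} ℓ(v) = 0. Then for all f ∈ ℝ: lim_{g→∞} B_ℓ(f, g) = ℓ(f) and lim_{g→−∞} B_ℓ(f, g) = ℓ(−f). -/

import Mathlib

open Filter Set

/-- Tangent line inequality for a differentiable convex function on ℝ. -/
lemma stmt13_tangent (ℓ : ℝ → ℝ) (hd : Differentiable ℝ ℓ)
    (hconv : ConvexOn ℝ Set.univ ℓ) (v u : ℝ) :
    ℓ v + deriv ℓ v * (u - v) ≤ ℓ u := by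
  rcases lt_trichotomy v u with h | rfl | h
  · have := hconv.deriv_le_slope (mem_univ v) (mem_univ u) h (hd v)
    rw [slope_def_field] at this
    have hpos : (0:ℝ) < u - v := by linarith
    have := (le_div_iff₀ hpos).mp this
    linarith
  · simp
  · have := hconv.slope_le_deriv (mem_univ u) (mem_univ v) h (hd v)
    rw [slope_def_field] at this
    have hpos : (0:ℝ) < v - u := by linarith
    have := (div_le_iff₀ hpos).mp this
    linarith

/-- The key vanishing limit: `deriv ℓ g * (a - g) → 0` as `g → ∞`. -/
lemma stmt13_key (ℓ : ℝ → ℝ) (hd : Differentiable ℝ ℓ)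
    (hconv : ConvexOn ℝ Set.univ ℓ)
    (hinf : IsGLB (Set.range ℓ) 0)
    (hlim : Filter.Tendsto ℓ Filter.atTop (nhds 0)) (a : ℝ) :
    Filter.Tendsto (fun g => deriv ℓ g * (a - g)) Filter.atTop (nhds 0) := by
  have hnn : ∀ x, 0 ≤ ℓ x := fun x => hinf.1 (mem_range_self x)
  -- deriv ℓ ≤ 0 everywhere
  have hderiv_le : ∀ v : ℝ, deriv ℓ v ≤ 0 := by
    intro v
    by_contra h
    push_neg at h
    have hrhs : Tendsto (fun u => ℓ v + deriv ℓ v * (u - v)) atTop atTop := by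
      apply tendsto_atTop_add_const_left
      exact (tendsto_atTop_add_const_right _ _ tendsto_id).const_mul_atTop h
    have h1 : ∀ᶠ u in atTop, ℓ u < 1 := by
      have := hlim.eventually (gt_mem_nhds (by norm_num : (0:ℝ) < 1))
      exact this
    have h2 : ∀ᶠ u in atTop, (1:ℝ) < ℓ v + deriv ℓ v * (u - v) :=
      hrhs.eventually_gt_atTop 1
    rcases (h1.and h2).exists with ⟨u, hu1, hu2⟩
    have := stmt13_tangent ℓ hd hconv v u
    linarith
  -- squeeze
  have hmid : Tendsto (fun g : ℝ => ℓ ((g + a) / 2)) atTop (nhds 0) := by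
    apply hlim.comp
    exact (tendsto_atTop_add_const_right _ _ tendsto_id).atTop_div_const (by norm_num)
  have hmid2 : Tendsto (fun g : ℝ => 2 * ℓ ((g + a) / 2)) atTop (nhds 0) := by
    have := hmid.const_mul (2:ℝ)
    simpa using this
  apply tendsto_of_tendsto_of_tendsto_of_le_of_le' tendsto_const_nhds hmid2
  · filter_upwards [eventually_ge_atTop a] with g hg
    have h1 : 0 ≤ (-deriv ℓ g) * (g - a) :=
      mul_nonneg (by linarith [hderiv_le g]) (by linarith)
    nlinarith [h1]
  · filter_upwards [eventually_ge_atTop a] with g hg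
    have := stmt13_tangent ℓ hd hconv g ((g + a) / 2)
    have h0 : 0 ≤ ℓ g := hnn g
    nlinarith [hnn ((g + a) / 2)]

/-- Gradient-symmetric losses as limits of Bregman divergences. -/
theorem stmt13 (ℓ : ℝ → ℝ) (hd : Differentiable ℝ ℓ) (hconv : StrictConvexOn ℝ Set.univ ℓ)
    (c : ℝ) (hgs : ∀ v : ℝ, deriv ℓ v + deriv ℓ (-v) = c)
    (hinf : IsGLB (Set.range ℓ) 0)
    (hlim : Filter.Tendsto ℓ Filter.atTop (nhds 0)) (f : ℝ) :
    Filter.Tendsto (fun g => ℓ f - ℓ g - deriv ℓ g * (f - g)) Filter.atTop (nhds (ℓ f)) ∧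
    Filter.Tendsto (fun g => ℓ f - ℓ g - deriv ℓ g * (f - g)) Filter.atBot (nhds (ℓ (-f))) := by
  have hcvx : ConvexOn ℝ Set.univ ℓ := hconv.convexOn
  -- ℓ v = ℓ (-v) + c * v
  have hsym : ∀ v : ℝ, ℓ v = ℓ (-v) + c * v := by
    have hconst : ∀ v : ℝ, ℓ v - ℓ (-v) - c * v = ℓ 0 - ℓ (-0) - c * 0 := by
      intro v
      apply is_const_of_deriv_eq_zero (f := fun v => ℓ v - ℓ (-v) - c * v)
      · apply Differentiable.sub
        · exact hd.sub (hd.comp differentiable_neg)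
        · exact (differentiable_id.const_mul c)
      · intro x
        have h1 : HasDerivAt (fun v : ℝ => ℓ (-v)) (-deriv ℓ (-x)) x := by
          have := ((hd (-x)).hasDerivAt).comp x (hasDerivAt_neg x)
          simpa [mul_comm, Function.comp_def] using this
        have h3 : HasDerivAt (fun v : ℝ => c * v) c x := by
          simpa using (hasDerivAt_id x).const_mul c
        have h2 : HasDerivAt (fun v : ℝ => ℓ v - ℓ (-v) - c * v)
            (deriv ℓ x - (-deriv ℓ (-x)) - c) x :=
          (((hd x).hasDerivAt).sub h1).sub h3
        rw [h2.deriv]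
        have := hgs x
        linarith
    intro v
    have := hconst v
    simp at this
    linarith
  constructor
  · -- atTop case
    have h1 : Tendsto (fun g : ℝ => ℓ f - ℓ g - deriv ℓ g * (f - g)) atTop
        (nhds (ℓ f - 0 - 0)) := by
      exact (tendsto_const_nhds.sub hlim).sub (stmt13_key ℓ hd hcvx hinf hlim f)
    simpa using h1
  · -- atBot case
    have hcomp : Tendsto (fun h : ℝ => ℓ f - ℓ (-h) - deriv ℓ (-h) * (f - (-h))) atTop
        (nhds (ℓ (-f))) := by
      have heq : ∀ h : ℝ, ℓ f - ℓ (-h) - deriv ℓ (-h) * (f - (-h))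
          = (ℓ f - c * f) - ℓ h - deriv ℓ h * ((-f) - h) := by
        intro h
        have e1 : ℓ (-h) = ℓ h - c * h := by have := hsym h; linarith
        have e2 : deriv ℓ (-h) = c - deriv ℓ h := by have := hgs h; linarith
        rw [e1, e2]; ring
      rw [show ℓ (-f) = ℓ f - c * f by have := hsym f; linarith]
      simp_rw [heq]
      have : Tendsto (fun h : ℝ => (ℓ f - c * f) - ℓ h - deriv ℓ h * ((-f) - h)) atTop
          (nhds ((ℓ f - c * f) - 0 - 0)) :=
        (tendsto_const_nhds.sub hlim).sub (stmt13_key ℓ hd hcvx hinf hlim (-f))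
      simpa using this
    have : Tendsto ((fun g : ℝ => ℓ f - ℓ g - deriv ℓ g * (f - g)) ∘ (fun h : ℝ => -h))
        atTop (nhds (ℓ (-f))) := hcomp
    have h2 := this.comp tendsto_neg_atBot_atTop
    have heq2 : ((fun g : ℝ => ℓ f - ℓ g - deriv ℓ g * (f - g)) ∘ (fun h : ℝ => -h)) ∘ Neg.neg
        = fun g : ℝ => ℓ f - ℓ g - deriv ℓ g * (f - g) := by
      funext x; simp [Function.comp]
    rwa [heq2] at h2
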